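/- Let R = ∅ or R = {Loop}. For every path formula π ∈ PDLsf[R] there exist path formulas Minπ, Maxπ ∈ PDLsf[R] such that for all MSCs M over P and Σ and events e, f: (e,f) ∈ ⟦Minπ⟧_M iff (⟦π⟧_M(e) ≠ ∅ and f = min_π(e)), and (e,f) ∈ ⟦Maxπ⟧_M iff (⟦π⟧_M(e) ≠ ∅ and f = max_π(e)). -/

import Mathlib

set_option maxHeartbeats 1000000

/-! ## Message sequence charts -/

/-- A message sequence chart (MSC) over processes `P` and labels `Lab`.
Events are natural numbers; `E` is the finite nonempty set of events. -/
structure MSC (P : Type) (Lab : Type) where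
  /-- the finite set of events -/
  E : Finset ℕ
  nonemptyE : E.Nonempty
  /-- process edges `→` (direct successor on a process) -/
  proc : ℕ → ℕ → Prop
  /-- message edges `◁` -/
  msg : ℕ → ℕ → Prop
  /-- location (process) of each event -/
  loc : ℕ → P
  /-- label of each event -/
  lab : ℕ → Lab
  proc_mem : ∀ e f, proc e f → e ∈ E ∧ f ∈ E
  msg_mem : ∀ e f, msg e f → e ∈ E ∧ f ∈ E
  proc_loc : ∀ e f, proc e f → loc e = loc f
  msg_loc : ∀ e f, msg e f → loc e ≠ loc f
  /-- on each process, any two events are comparable w.r.t. `→⁺` -/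
  proc_total : ∀ e f, e ∈ E → f ∈ E → loc e = loc f →
    e = f ∨ Relation.TransGen proc e f ∨ Relation.TransGen proc f e
  /-- `→` is the direct-successor (covering) relation of the order `→⁺` -/
  proc_cover : ∀ e f, proc e f →
    ¬ ∃ g, Relation.TransGen proc e g ∧ Relation.TransGen proc g f
  /-- every event belongs to at most one message edge -/
  msg_once : ∀ e f e' f', msg e f → msg e' f' →
    (e = e' ∨ e = f' ∨ f = e' ∨ f = f') → e = e' ∧ f = f'
  /-- FIFO condition -/
  fifo : ∀ e f e' f', msg e f → msg e' f' → loc e = loc e' → loc f = loc f' →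
    (Relation.ReflTransGen proc e e' ↔ Relation.ReflTransGen proc f f')
  /-- `→ ∪ ◁` is acyclic -/
  acyclic : ∀ e, ¬ Relation.TransGen (fun a b => proc a b ∨ msg a b) e e

namespace MSC

variable {P Lab : Type}

/-- `≤proc`, the reflexive transitive closure of `→`. -/
def procLe (M : MSC P Lab) : ℕ → ℕ → Prop := Relation.ReflTransGen M.proc

/-- `<proc`, the transitive closure of `→`. -/
def procLt (M : MSC P Lab) : ℕ → ℕ → Prop := Relation.TransGen M.proc

/-- the happened-before relation `≤ = (→ ∪ ◁)*`. -/
def hb (M : MSC P Lab) : ℕ → ℕ → Prop :=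
  Relation.ReflTransGen (fun a b => M.proc a b ∨ M.msg a b)

/-- Relabelling an MSC (same events and edges, new labelling). -/
def relabel {Γ : Type} (M : MSC P Lab) (γ : ℕ → Γ) : MSC P Γ where
  E := M.E
  nonemptyE := M.nonemptyE
  proc := M.proc
  msg := M.msg
  loc := M.loc
  lab := γ
  proc_mem := M.proc_mem
  msg_mem := M.msg_mem
  proc_loc := M.proc_loc
  msg_loc := M.msg_loc
  proc_total := M.proc_total
  proc_cover := M.proc_cover
  msg_once := M.msg_once
  fifo := M.fifo
  acyclic := M.acyclic

end MSC

/-! ## Star-free PDL -/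

mutual
/-- Event formulas of star-free PDL. -/
inductive EF (P Lab : Type) : Type where
  | proc : P → EF P Lab
  | lab : Lab → EF P Lab
  | or : EF P Lab → EF P Lab → EF P Lab
  | not : EF P Lab → EF P Lab
  | dia : PF P Lab → EF P Lab → EF P Lab
  | loop : PF P Lab → EF P Lab
/-- Path formulas of star-free PDL. -/
inductive PF (P Lab : Type) : Type where
  | next : PF P Lab
  | prev : PF P Lab
  | msg : P → P → PF P Lab
  | msgInv : P → P → PF P Lab
  | nextG : EF P Lab → PF P Lab
  | prevG : EF P Lab → PF P Lab
  | jump : P → P → PF P Lab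
  | test : EF P Lab → PF P Lab
  | comp : PF P Lab → PF P Lab → PF P Lab
  | union : PF P Lab → PF P Lab → PF P Lab
  | inter : PF P Lab → PF P Lab → PF P Lab
  | compl : PF P Lab → PF P Lab
end

mutual
/-- Satisfaction of event formulas at an event. -/
def EF.sat {P Lab : Type} (M : MSC P Lab) : EF P Lab → ℕ → Prop
  | .proc p, e => e ∈ M.E ∧ M.loc e = p
  | .lab a, e => e ∈ M.E ∧ M.lab e = a
  | .or φ ψ, e => EF.sat M φ e ∨ EF.sat M ψ e
  | .not φ, e => e ∈ M.E ∧ ¬ EF.sat M φ e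
  | .dia π φ, e => ∃ f, PF.sem M π e f ∧ EF.sat M φ f
  | .loop π, e => PF.sem M π e e
/-- Semantics of path formulas as binary relations on events. -/
def PF.sem {P Lab : Type} (M : MSC P Lab) : PF P Lab → ℕ → ℕ → Prop
  | .next, e, f => M.proc e f
  | .prev, e, f => M.proc f e
  | .msg p q, e, f => M.msg e f ∧ M.loc e = p ∧ M.loc f = q
  | .msgInv p q, e, f => M.msg f e ∧ M.loc f = p ∧ M.loc e = q
  | .nextG φ, e, f => M.procLt e f ∧ ∀ g, M.procLt e g → M.procLt g f → EF.sat M φ g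
  | .prevG φ, e, f => M.procLt f e ∧ ∀ g, M.procLt f g → M.procLt g e → EF.sat M φ g
  | .jump p r, e, f => e ∈ M.E ∧ f ∈ M.E ∧ M.loc e = p ∧ M.loc f = r
  | .test φ, e, f => e = f ∧ EF.sat M φ e
  | .comp π₁ π₂, e, f => ∃ g, PF.sem M π₁ e g ∧ PF.sem M π₂ g f
  | .union π₁ π₂, e, f => PF.sem M π₁ e f ∨ PF.sem M π₂ e f
  | .inter π₁ π₂, e, f => PF.sem M π₁ e f ∧ PF.sem M π₂ e f
  | .compl π, e, f => e ∈ M.E ∧ f ∈ M.E ∧ ¬ PF.sem M π e f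
end

/-- Sentences of star-free PDL. -/
inductive PDLS (P Lab : Type) : Type where
  | ex : EF P Lab → PDLS P Lab
  | or : PDLS P Lab → PDLS P Lab → PDLS P Lab
  | not : PDLS P Lab → PDLS P Lab

/-- Satisfaction of PDL sentences. -/
def PDLS.sat {P Lab : Type} (M : MSC P Lab) : PDLS P Lab → Prop
  | .ex φ => ∃ e ∈ M.E, EF.sat M φ e
  | .or ξ ζ => PDLS.sat M ξ ∨ PDLS.sat M ζ
  | .not ξ => ¬ PDLS.sat M ξ

/-- The four optional operators of star-free PDL. -/
inductive PDLOp : Type where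
  | loop | union | inter | compl
deriving DecidableEq

mutual
/-- `EF.inFrag R φ` : the event formula `φ` belongs to the fragment `PDLsf[R]`. -/
def EF.inFrag {P Lab : Type} (R : Set PDLOp) : EF P Lab → Prop
  | .proc _ => True
  | .lab _ => True
  | .or φ ψ => EF.inFrag R φ ∧ EF.inFrag R ψ
  | .not φ => EF.inFrag R φ
  | .dia π φ => PF.inFrag R π ∧ EF.inFrag R φ
  | .loop π => PDLOp.loop ∈ R ∧ PF.inFrag R π
/-- `PF.inFrag R π` : the path formula `π` belongs to the fragment `PDLsf[R]`. -/
def PF.inFrag {P Lab : Type} (R : Set PDLOp) : PF P Lab → Prop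
  | .next => True
  | .prev => True
  | .msg _ _ => True
  | .msgInv _ _ => True
  | .nextG φ => EF.inFrag R φ
  | .prevG φ => EF.inFrag R φ
  | .jump _ _ => True
  | .test φ => EF.inFrag R φ
  | .comp π₁ π₂ => PF.inFrag R π₁ ∧ PF.inFrag R π₂
  | .union π₁ π₂ => PDLOp.union ∈ R ∧ PF.inFrag R π₁ ∧ PF.inFrag R π₂
  | .inter π₁ π₂ => PDLOp.inter ∈ R ∧ PF.inFrag R π₁ ∧ PF.inFrag R π₂
  | .compl π => PDLOp.compl ∈ R ∧ PF.inFrag R π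
end

/-- `PDLS.inFrag R ξ` : the sentence `ξ` belongs to the fragment `PDLsf[R]`. -/
def PDLS.inFrag {P Lab : Type} (R : Set PDLOp) : PDLS P Lab → Prop
  | .ex φ => EF.inFrag R φ
  | .or ξ ζ => PDLS.inFrag R ξ ∧ PDLS.inFrag R ζ
  | .not ξ => PDLS.inFrag R ξ

/-- Conjunction of event formulas (derived operator). -/
def EF.and {P Lab : Type} (φ ψ : EF P Lab) : EF P Lab :=
  .not (.or (.not φ) (.not ψ))

/-- `isMinOf M π e m` : `m` is the `≤proc`-least element of `⟦π⟧_M(e)`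
(in particular `⟦π⟧_M(e)` is nonempty). -/
def isMinOf {P Lab : Type} (M : MSC P Lab) (π : PF P Lab) (e m : ℕ) : Prop :=
  PF.sem M π e m ∧ ∀ f, PF.sem M π e f → M.procLe m f

/-- `isMaxOf M π e m` : `m` is the `≤proc`-greatest element of `⟦π⟧_M(e)`
(in particular `⟦π⟧_M(e)` is nonempty). -/
def isMaxOf {P Lab : Type} (M : MSC P Lab) (π : PF P Lab) (e m : ℕ) : Prop :=
  PF.sem M π e m ∧ ∀ f, PF.sem M π e f → M.procLe f m

/-! ## MSO/FO logic over MSCs -/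

/-- Formulas of MSO over MSCs: first-order kernel with atoms `p(x)`, `a(x)`,
`x = y`, `x → y`, `x ◁ y`, `x ≤ y` and additionally `x ∈ X_k` (monadic
second-order variables, used for the EMSO prefix). -/
inductive FOS (P Lab : Type) : Type where
  | pred : P → ℕ → FOS P Lab
  | lab : Lab → ℕ → FOS P Lab
  | eq : ℕ → ℕ → FOS P Lab
  | edge : ℕ → ℕ → FOS P Lab
  | medge : ℕ → ℕ → FOS P Lab
  | le : ℕ → ℕ → FOS P Lab
  | inSet : ℕ → ℕ → FOS P Lab
  | or : FOS P Lab → FOS P Lab → FOS P Lab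
  | not : FOS P Lab → FOS P Lab
  | ex : ℕ → FOS P Lab → FOS P Lab

/-- Satisfaction, with a first-order valuation `ν` and a second-order valuation `σ`.
First-order quantification ranges over the events of the MSC. -/
def FOS.sat {P Lab : Type} (M : MSC P Lab) : FOS P Lab → (ℕ → ℕ) → (ℕ → Set ℕ) → Prop
  | .pred p x, ν, _ => M.loc (ν x) = p
  | .lab a x, ν, _ => M.lab (ν x) = a
  | .eq x y, ν, _ => ν x = ν y
  | .edge x y, ν, _ => M.proc (ν x) (ν y)
  | .medge x y, ν, _ => M.msg (ν x) (ν y)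
  | .le x y, ν, _ => M.hb (ν x) (ν y)
  | .inSet x k, ν, σ => ν x ∈ σ k
  | .or Φ Ψ, ν, σ => FOS.sat M Φ ν σ ∨ FOS.sat M Ψ ν σ
  | .not Φ, ν, σ => ¬ FOS.sat M Φ ν σ
  | .ex x Φ, ν, σ => ∃ e ∈ M.E, FOS.sat M Φ (Function.update ν x e) σ

/-- Free first-order variables. -/
def FOS.free {P Lab : Type} : FOS P Lab → Finset ℕ
  | .pred _ x => {x}
  | .lab _ x => {x}
  | .eq x y => {x, y}
  | .edge x y => {x, y}
  | .medge x y => {x, y}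
  | .le x y => {x, y}
  | .inSet x _ => {x}
  | .or Φ Ψ => FOS.free Φ ∪ FOS.free Ψ
  | .not Φ => FOS.free Φ
  | .ex x Φ => (FOS.free Φ).erase x

/-- All first-order variables occurring (free or bound). -/
def FOS.vars {P Lab : Type} : FOS P Lab → Finset ℕ
  | .pred _ x => {x}
  | .lab _ x => {x}
  | .eq x y => {x, y}
  | .edge x y => {x, y}
  | .medge x y => {x, y}
  | .le x y => {x, y}
  | .inSet x _ => {x}
  | .or Φ Ψ => FOS.vars Φ ∪ FOS.vars Ψ
  | .not Φ => FOS.vars Φ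
  | .ex x Φ => insert x (FOS.vars Φ)

/-- A formula is first-order (`FO[→,◁,≤]`) iff it contains no set atoms. -/
def FOS.noSets {P Lab : Type} : FOS P Lab → Prop
  | .pred _ _ => True
  | .lab _ _ => True
  | .eq _ _ => True
  | .edge _ _ => True
  | .medge _ _ => True
  | .le _ _ => True
  | .inSet _ _ => False
  | .or Φ Ψ => FOS.noSets Φ ∧ FOS.noSets Ψ
  | .not Φ => FOS.noSets Φ
  | .ex _ Φ => FOS.noSets Φ

/-! ## Communicating finite-state machines -/

/-- Actions of a process: internal `⟨a⟩`, send `!(a,m,q)`, receive `?(a,m,q)`. -/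
inductive CAct (P Lab Msg : Type) : Type where
  | int : Lab → CAct P Lab Msg
  | snd : Lab → Msg → P → CAct P Lab Msg
  | rcv : Lab → Msg → P → CAct P Lab Msg

/-- The label performed by an action. -/
def CAct.label {P Lab Msg : Type} : CAct P Lab Msg → Lab
  | .int a => a
  | .snd a _ _ => a
  | .rcv a _ _ => a

/-- A communicating finite-state machine over `P` and `Lab`. -/
structure CFM (P Lab : Type) where
  /-- states -/
  S : Type
  finS : Fintype S
  /-- messages -/
  Msg : Type
  finMsg : Fintype Msg
  /-- initial state of each process -/
  ι : P → S
  /-- transition relation of each process -/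
  Δ : P → S → CAct P Lab Msg → S → Prop
  Δ_snd : ∀ p s a m q s', Δ p s (.snd a m q) s' → q ≠ p
  Δ_rcv : ∀ p s a m q s', Δ p s (.rcv a m q) s' → q ≠ p
  /-- acceptance condition -/
  Acc : (P → S) → Prop

/-- Existence of an accepting run of a CFM on an MSC. -/
def CFM.Accepts {P Lab : Type} (A : CFM P Lab) (M : MSC P Lab) : Prop :=
  ∃ (src tgt : ℕ → A.S) (act : ℕ → CAct P Lab A.Msg),
    (∀ e ∈ M.E, A.Δ (M.loc e) (src e) (act e) (tgt e)) ∧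
    (∀ e ∈ M.E, (act e).label = M.lab e) ∧
    (∀ e ∈ M.E, (¬ ∃ f, M.proc f e) → src e = A.ι (M.loc e)) ∧
    (∀ e f, M.proc e f → tgt e = src f) ∧
    (∀ e ∈ M.E, (¬ ∃ f, M.msg e f) → (¬ ∃ f, M.msg f e) → ∃ a, act e = .int a) ∧
    (∀ e f, M.msg e f →
      ∃ a a' m, act e = .snd a m (M.loc f) ∧ act f = .rcv a' m (M.loc e)) ∧
    (∃ fin : P → A.S,
      (∀ p, (∀ e ∈ M.E, M.loc e ≠ p) → fin p = A.ι p) ∧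
      (∀ e ∈ M.E, (¬ ∃ f, M.proc e f) → fin (M.loc e) = tgt e) ∧
      A.Acc fin)

/-- The language of a CFM. -/
def CFM.lang {P Lab : Type} (A : CFM P Lab) : Set (MSC P Lab) := {M | A.Accepts M}

/-! ## Letter-to-letter MSC transducers -/

/-- The relation accepted by a letter-to-letter MSC transducer from `Lab` to `Γ`,
i.e., a CFM over `P` and `Lab × Γ`. -/
def Ltrans {P Lab Γ : Type} (A : CFM P (Lab × Γ)) (M : MSC P Lab) (N : MSC P Γ) : Prop :=
  ∃ γ : ℕ → Γ, N = M.relabel γ ∧ A.Accepts (M.relabel fun e => (M.lab e, γ e))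

/-- `M_φ` : the MSC over `Bool` obtained from `M` by labelling each event with
the truth value of the event formula `φ`. -/
noncomputable def MSC.evalEF {P Lab : Type} (M : MSC P Lab) (φ : EF P Lab) : MSC P Bool :=
  M.relabel fun e => @ite Bool (EF.sat M φ e) (Classical.propDecidable _) true false

/-! ## Boolean combinations -/

/-- Boolean combinations over atoms of type `α`. -/
inductive BC (α : Type) : Type where
  | atom : α → BC α
  | or : BC α → BC α → BC α
  | not : BC α → BC α

/-- Evaluation of a boolean combination given truth values of the atoms. -/
def BC.eval {α : Type} (v : α → Prop) : BC α → Prop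
  | .atom a => v a
  | .or b c => BC.eval v b ∨ BC.eval v c
  | .not b => ¬ BC.eval v b

/-- The atoms occurring in a boolean combination. -/
def BC.atoms {α : Type} : BC α → Set α
  | .atom a => {a}
  | .or b c => BC.atoms b ∪ BC.atoms c
  | .not b => BC.atoms b

/-! ## Bounded MSCs -/

/-- `r` is a linearization of `M`: a total order on the events containing
the happened-before relation. -/
def IsLinearization {P Lab : Type} (M : MSC P Lab) (r : ℕ → ℕ → Prop) : Prop :=
  (∀ e ∈ M.E, r e e) ∧
  (∀ e ∈ M.E, ∀ f ∈ M.E, r e f → r f e → e = f) ∧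
  (∀ e ∈ M.E, ∀ f ∈ M.E, ∀ g ∈ M.E, r e f → r f g → r e g) ∧
  (∀ e ∈ M.E, ∀ f ∈ M.E, r e f ∨ r f e) ∧
  (∀ e ∈ M.E, ∀ f ∈ M.E, M.hb e f → r e f)

/-- `r` is a `B`-bounded linearization of `M`: at any point, each channel
contains at most `B` pending messages. -/
def IsBBoundedLin {P Lab : Type} (M : MSC P Lab) (r : ℕ → ℕ → Prop) (B : ℕ) : Prop :=
  IsLinearization M r ∧
  ∀ g ∈ M.E, ∀ p q : P, p ≠ q →
    Set.ncard {ef : ℕ × ℕ | M.msg ef.1 ef.2 ∧ M.loc ef.1 = p ∧ M.loc ef.2 = q ∧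
      r ef.1 g ∧ ¬ r ef.2 g} ≤ B

/-- `M` is `∃B`-bounded: some linearization of `M` is `B`-bounded. -/
def ExistsBBounded {P Lab : Type} (M : MSC P Lab) (B : ℕ) : Prop :=
  ∃ r : ℕ → ℕ → Prop, IsBBoundedLin M r B

/-- `g` is a send event on channel `(p,q)`. -/
def isSendOn {P Lab : Type} (M : MSC P Lab) (p q : P) (g : ℕ) : Prop :=
  M.loc g = p ∧ ∃ h, M.msg g h ∧ M.loc h = q

/-- `revB M B f g` : `f` is a receive event with matching send `e` on some
channel `(p,q)`, and `g` is the `B`-th send on channel `(p,q)` strictly after `e`. -/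
def revB {P Lab : Type} (M : MSC P Lab) (B : ℕ) (f g : ℕ) : Prop :=
  ∃ e, M.msg e f ∧ isSendOn M (M.loc e) (M.loc f) g ∧ M.procLt e g ∧
    Set.ncard {g' | isSendOn M (M.loc e) (M.loc f) g' ∧ M.procLt e g' ∧ M.procLe g' g} = B

/-- `≤_B = (≤ ∪ rev_B)*`. -/
def leB {P Lab : Type} (M : MSC P Lab) (B : ℕ) : ℕ → ℕ → Prop :=
  Relation.ReflTransGen (fun a b => (M.proc a b ∨ M.msg a b) ∨ revB M B a b)

/-- `<_B`, the strict part of `≤_B`. -/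
def ltB {P Lab : Type} (M : MSC P Lab) (B : ℕ) (e f : ℕ) : Prop :=
  leB M B e f ∧ ¬ leB M B f e

/-- `e ∥_B f` : incomparable w.r.t. `≤_B`. -/
def parB {P Lab : Type} (M : MSC P Lab) (B : ℕ) (e f : ℕ) : Prop :=
  ¬ leB M B e f ∧ ¬ leB M B f e

/-- `↑_B e = {g : e ≤_B g}`. -/
def upB {P Lab : Type} (M : MSC P Lab) (B : ℕ) (e : ℕ) : Set ℕ :=
  {g | leB M B e g}

/-- The order `≺_B` (w.r.t. a fixed total order on `P`): `e ≺_B f` iff `e <_B f`, or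
`e ∥_B f` and the `⊑`-minimum of `loc(↑_B e \ ↑_B f)` is strictly below the
`⊑`-minimum of `loc(↑_B f \ ↑_B e)`. -/
def precB {P Lab : Type} [LinearOrder P] (M : MSC P Lab) (B : ℕ) (e f : ℕ) : Prop :=
  ltB M B e f ∨
    (parB M B e f ∧ ∃ p ∈ M.loc '' (upB M B e \ upB M B f),
      ∀ q ∈ M.loc '' (upB M B f \ upB M B e), p < q)

/-! ### Auxiliary development for Statement 9 -/

namespace MinMax

open Relation

variable {P Lab : Type}

section Basic

variable {M : MSC P Lab} {e f g h : ℕ}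

theorem procLe_refl (M : MSC P Lab) (e : ℕ) : M.procLe e e := ReflTransGen.refl

theorem procLe_trans (h1 : M.procLe e f) (h2 : M.procLe f g) : M.procLe e g :=
  ReflTransGen.trans h1 h2

theorem procLt_trans (h1 : M.procLt e f) (h2 : M.procLt f g) : M.procLt e g :=
  TransGen.trans h1 h2

theorem procLe_of_lt (h1 : M.procLt e f) : M.procLe e f :=
  TransGen.to_reflTransGen h1

theorem procLt_of_lt_of_le (h1 : M.procLt e f) (h2 : M.procLe f g) : M.procLt e g :=
  TransGen.trans_left h1 h2

theorem procLt_of_le_of_lt (h1 : M.procLe e f) (h2 : M.procLt f g) : M.procLt e g :=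
  TransGen.trans_right h1 h2

theorem procLe_of_proc (h1 : M.proc e f) : M.procLe e f := ReflTransGen.single h1

theorem procLt_of_proc (h1 : M.proc e f) : M.procLt e f := TransGen.single h1

theorem procLt_irrefl (M : MSC P Lab) (e : ℕ) : ¬ M.procLt e e := by
  intro hlt
  have hlt' : TransGen M.proc e e := hlt
  have key : ∀ a b, TransGen M.proc a b → TransGen (fun a b => M.proc a b ∨ M.msg a b) a b := by
    intro a b hab
    induction hab with
    | single h => exact TransGen.single (Or.inl h)
    | tail _ h ih => exact TransGen.tail ih (Or.inl h)
  exact M.acyclic e (key e e hlt')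

theorem procLe_antisymm (h1 : M.procLe e f) (h2 : M.procLe f e) : e = f := by
  rcases (reflTransGen_iff_eq_or_transGen.1 h1) with h | h
  · exact h.symm
  rcases (reflTransGen_iff_eq_or_transGen.1 h2) with h' | h'
  · exact h'
  exact absurd (procLt_trans h h') (procLt_irrefl M e)

theorem not_lt_of_le (h1 : M.procLe e f) : ¬ M.procLt f e := fun h2 =>
  procLt_irrefl M f (procLt_of_lt_of_le h2 h1)

theorem procLt_mem (h1 : M.procLt e f) : e ∈ M.E ∧ f ∈ M.E := by
  refine ⟨?_, ?_⟩
  · rcases TransGen.head'_iff.1 h1 with ⟨b, hb, -⟩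
    exact (M.proc_mem _ _ hb).1
  · rcases TransGen.tail'_iff.1 h1 with ⟨b, -, hb⟩
    exact (M.proc_mem _ _ hb).2

theorem procLe_loc (h1 : M.procLe e f) : M.loc e = M.loc f := by
  induction h1 with
  | refl => rfl
  | tail hab hbc ih => exact ih.trans (M.proc_loc _ _ hbc)

theorem procLt_loc (h1 : M.procLt e f) : M.loc e = M.loc f :=
  procLe_loc (procLe_of_lt h1)

theorem procLe_total (he : e ∈ M.E) (hf : f ∈ M.E) (hl : M.loc e = M.loc f) :
    M.procLe e f ∨ M.procLe f e := by
  rcases M.proc_total e f he hf hl with h | h | h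
  · exact Or.inl (h ▸ ReflTransGen.refl)
  · exact Or.inl (procLe_of_lt h)
  · exact Or.inr (procLe_of_lt h)

/-- Comparability: either `e ≤ f` or `f < e`. -/
theorem procLe_or_lt (he : e ∈ M.E) (hf : f ∈ M.E) (hl : M.loc e = M.loc f) :
    M.procLe e f ∨ M.procLt f e := by
  rcases procLe_total he hf hl with h | h
  · exact Or.inl h
  rcases (reflTransGen_iff_eq_or_transGen.1 h) with h' | h'
  · exact Or.inl (h' ▸ ReflTransGen.refl)
  · exact Or.inr h'

theorem succ_unique (h1 : M.proc e f) (h2 : M.proc e g) : f = g := by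
  by_contra hne
  have hf := M.proc_mem _ _ h1
  have hg := M.proc_mem _ _ h2
  have hl : M.loc f = M.loc g := (M.proc_loc _ _ h1).symm.trans (M.proc_loc _ _ h2)
  rcases M.proc_total f g hf.2 hg.2 hl with h | h | h
  · exact hne h
  · exact M.proc_cover e g h2 ⟨f, TransGen.single h1, h⟩
  · exact M.proc_cover e f h1 ⟨g, TransGen.single h2, h⟩

theorem pred_unique (h1 : M.proc f e) (h2 : M.proc g e) : f = g := by
  by_contra hne
  have hf := M.proc_mem _ _ h1
  have hg := M.proc_mem _ _ h2
  have hl : M.loc f = M.loc g := (M.proc_loc _ _ h1).trans (M.proc_loc _ _ h2).symm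
  rcases M.proc_total f g hf.1 hg.1 hl with h | h | h
  · exact hne h
  · exact M.proc_cover f e h1 ⟨g, h, TransGen.single h2⟩
  · exact M.proc_cover g e h2 ⟨f, h, TransGen.single h1⟩

/-- If `g` is the direct successor of `e` and `e < f` then `g ≤ f`. -/
theorem le_succ_of_lt (h1 : M.proc e g) (h2 : M.procLt e f) : M.procLe g f := by
  rcases TransGen.head'_iff.1 h2 with ⟨b, hb, hbf⟩
  rwa [succ_unique h1 hb]

/-- If `g` is the direct predecessor of `f` and `e < f` then `e ≤ g`. -/
theorem le_pred_of_lt (h1 : M.proc g f) (h2 : M.procLt e f) : M.procLe e g := by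
  rcases TransGen.tail'_iff.1 h2 with ⟨b, hb, hbf⟩
  rw [pred_unique h1 hbf]; exact hb

theorem exists_pred_of_lt (h2 : M.procLt e f) : ∃ h, M.proc h f := by
  rcases TransGen.tail'_iff.1 h2 with ⟨b, -, hb⟩
  exact ⟨b, hb⟩

theorem exists_succ_of_lt (h2 : M.procLt e f) : ∃ h, M.proc e h := by
  rcases TransGen.head'_iff.1 h2 with ⟨b, hb, -⟩
  exact ⟨b, hb⟩

theorem tg_flip' {α : Type*} {r s : α → α → Prop} (hrs : ∀ x y, s x y ↔ r y x) {a b : α} :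
    TransGen s a b ↔ TransGen r b a := by
  constructor
  · intro h
    induction h with
    | @single c h => exact TransGen.single ((hrs _ _).1 h)
    | @tail c d hab h ih => refine TransGen.head ?_ ih; exact (hrs _ _).1 h
  · intro h
    induction h with
    | @single c h => exact TransGen.single ((hrs _ _).2 h)
    | @tail c d hab h ih => refine TransGen.head ?_ ih; exact (hrs _ _).2 h

theorem rtg_flip' {α : Type*} {r s : α → α → Prop} (hrs : ∀ x y, s x y ↔ r y x) {a b : α} :
    ReflTransGen s a b ↔ ReflTransGen r b a := by
  constructor
  · intro h
    induction h with
    | refl => exact ReflTransGen.refl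
    | @tail c d hab h ih => refine ReflTransGen.head ?_ ih; exact (hrs _ _).1 h
  · intro h
    induction h with
    | refl => exact ReflTransGen.refl
    | @tail c d hab h ih => refine ReflTransGen.head ?_ ih; exact (hrs _ _).2 h

/-- A nonempty finite pairwise-comparable set of events has a `≤proc`-least element. -/
theorem exists_min_list (M : MSC P Lab) :
    ∀ l : List ℕ, l ≠ [] → (∀ a ∈ l, ∀ b ∈ l, M.procLe a b ∨ M.procLe b a) →
      ∃ m ∈ l, ∀ x ∈ l, M.procLe m x := by
  intro l
  induction l with
  | nil => intro h; exact absurd rfl h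
  | cons a t ih =>
    intro _ htot
    rcases eq_or_ne t [] with rfl | hne
    · refine ⟨a, List.mem_cons_self, ?_⟩
      intro x hx
      rcases List.mem_singleton.1 hx with rfl
      exact ReflTransGen.refl
    · obtain ⟨m, hm, hmin⟩ := ih hne (fun x hx y hy =>
        htot x (List.mem_cons_of_mem _ hx) y (List.mem_cons_of_mem _ hy))
      rcases htot a (List.mem_cons_self) m (List.mem_cons_of_mem _ hm) with hc | hc
      · refine ⟨a, List.mem_cons_self, ?_⟩
        intro x hx
        rcases List.mem_cons.1 hx with rfl | hx
        · exact ReflTransGen.refl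
        · exact procLe_trans hc (hmin x hx)
      · refine ⟨m, List.mem_cons_of_mem _ hm, ?_⟩
        intro x hx
        rcases List.mem_cons.1 hx with rfl | hx
        · exact hc
        · exact hmin x hx

theorem exists_min {S : Set ℕ} (hS : S ⊆ ↑M.E) (hne : S.Nonempty)
    (htot : ∀ a ∈ S, ∀ b ∈ S, M.procLe a b ∨ M.procLe b a) :
    ∃ m ∈ S, ∀ x ∈ S, M.procLe m x := by
  have hfin : S.Finite := Set.Finite.subset (M.E.finite_toSet) hS
  have hl : ∀ x, x ∈ hfin.toFinset.toList ↔ x ∈ S := by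
    intro x; rw [Finset.mem_toList, Set.Finite.mem_toFinset]
  have hlne : hfin.toFinset.toList ≠ [] := by
    intro h
    rcases hne with ⟨x, hx⟩
    have := (hl x).2 hx
    simp [h] at this
  obtain ⟨m, hm, hmin⟩ := exists_min_list M hfin.toFinset.toList hlne
    (fun a ha b hb => htot a ((hl a).1 ha) b ((hl b).1 hb))
  exact ⟨m, (hl m).1 hm, fun x hx => hmin x ((hl x).2 hx)⟩

end Basic

mutual

theorem sat_mem (M : MSC P Lab) : ∀ (φ : EF P Lab) (e : ℕ), EF.sat M φ e → e ∈ M.E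
  | .proc _, _, h => h.1
  | .lab _, _, h => h.1
  | .or φ ψ, e, h => h.elim (sat_mem M φ e) (sat_mem M ψ e)
  | .not _, _, h => h.1
  | .dia π φ, e, h => by
      obtain ⟨f, hf, _⟩ := h
      exact (sem_mem M π e f hf).1
  | .loop π, e, h => (sem_mem M π e e h).1

theorem sem_mem (M : MSC P Lab) :
    ∀ (π : PF P Lab) (e f : ℕ), PF.sem M π e f → e ∈ M.E ∧ f ∈ M.E
  | .next, e, f, h => M.proc_mem e f h
  | .prev, e, f, h => ⟨(M.proc_mem f e h).2, (M.proc_mem f e h).1⟩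
  | .msg _ _, e, f, h => M.msg_mem e f h.1
  | .msgInv _ _, e, f, h => ⟨(M.msg_mem f e h.1).2, (M.msg_mem f e h.1).1⟩
  | .nextG _, e, f, h => procLt_mem h.1
  | .prevG _, e, f, h => ⟨(procLt_mem h.1).2, (procLt_mem h.1).1⟩
  | .jump _ _, e, f, h => ⟨h.1, h.2.1⟩
  | .test φ, e, f, h => ⟨sat_mem M φ e h.2, h.1 ▸ sat_mem M φ e h.2⟩
  | .comp π₁ π₂, e, f, h => by
      obtain ⟨g, h1, h2⟩ := h
      exact ⟨(sem_mem M π₁ e g h1).1, (sem_mem M π₂ g f h2).2⟩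
  | .union π₁ π₂, e, f, h => h.elim (sem_mem M π₁ e f) (sem_mem M π₂ e f)
  | .inter π₁ π₂, e, f, h => sem_mem M π₁ e f h.1
  | .compl _, e, f, h => ⟨h.1, h.2.1⟩

end

section Helpers

set_option linter.unusedSectionVars false

/-- A "true" event formula. -/
noncomputable def tt [Nonempty Lab] : EF P Lab := .or (.lab (Classical.arbitrary Lab)) (.not (.lab (Classical.arbitrary Lab)))

theorem sat_tt [Nonempty Lab] {M : MSC P Lab} {e : ℕ} : EF.sat M tt e ↔ e ∈ M.E := by
  constructor
  · intro h
    exact sat_mem M _ e h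
  · intro h
    by_cases hl : M.lab e = Classical.arbitrary Lab
    · exact Or.inl ⟨h, hl⟩
    · exact Or.inr ⟨h, fun hc => hl hc.2⟩

theorem inFrag_tt [Nonempty Lab] {R : Set PDLOp} : EF.inFrag R (tt : EF P Lab) := by
  constructor <;> trivial

theorem sat_and {M : MSC P Lab} {φ ψ : EF P Lab} {e : ℕ} :
    EF.sat M (EF.and φ ψ) e ↔ e ∈ M.E ∧ EF.sat M φ e ∧ EF.sat M ψ e := by
  simp only [EF.and, EF.sat]
  tauto

theorem inFrag_and {R : Set PDLOp} {φ ψ : EF P Lab} :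
    EF.inFrag R (EF.and φ ψ) ↔ EF.inFrag R φ ∧ EF.inFrag R ψ := by
  simp only [EF.and, EF.inFrag]

theorem sat_not {M : MSC P Lab} {φ : EF P Lab} {e : ℕ} :
    EF.sat M (.not φ) e ↔ e ∈ M.E ∧ ¬ EF.sat M φ e := Iff.rfl

/-- `⟨←⟩⊤` : having a direct predecessor. -/
theorem sat_dia {M : MSC P Lab} {π : PF P Lab} {φ : EF P Lab} {e : ℕ} :
    EF.sat M (.dia π φ) e ↔ ∃ f, PF.sem M π e f ∧ EF.sat M φ f := Iff.rfl

theorem sat_dia_prev [Nonempty Lab] {M : MSC P Lab} {e : ℕ} :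
    EF.sat M (.dia .prev tt) e ↔ ∃ h, M.proc h e := by
  rw [sat_dia]
  constructor
  · rintro ⟨f, hf, -⟩; exact ⟨f, hf⟩
  · rintro ⟨f, hf⟩; exact ⟨f, hf, sat_tt.2 (M.proc_mem _ _ hf).1⟩

theorem sat_dia_next [Nonempty Lab] {M : MSC P Lab} {e : ℕ} :
    EF.sat M (.dia .next tt) e ↔ ∃ h, M.proc e h := by
  rw [sat_dia]
  constructor
  · rintro ⟨f, hf, -⟩; exact ⟨f, hf⟩
  · rintro ⟨f, hf⟩; exact ⟨f, hf, sat_tt.2 (M.proc_mem _ _ hf).2⟩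

/-- `⟨←_⊤⟩φ` : some strict `≤proc`-predecessor satisfies `φ`. -/
theorem sat_dia_prevG_tt [Nonempty Lab] {M : MSC P Lab} {φ : EF P Lab} {e : ℕ} :
    EF.sat M (.dia (.prevG tt) φ) e ↔ ∃ h, M.procLt h e ∧ EF.sat M φ h := by
  rw [sat_dia]
  simp only [PF.sem]
  constructor
  · rintro ⟨f, ⟨hf, -⟩, hs⟩; exact ⟨f, hf, hs⟩
  · rintro ⟨f, hf, hs⟩
    exact ⟨f, ⟨hf, fun g hg _ => sat_tt.2 (procLt_mem hg).2⟩, hs⟩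

theorem sem_test {M : MSC P Lab} {φ : EF P Lab} {e f : ℕ} :
    PF.sem M (.test φ) e f ↔ e = f ∧ EF.sat M φ e := Iff.rfl

theorem sem_comp {M : MSC P Lab} {π₁ π₂ : PF P Lab} {e f : ℕ} :
    PF.sem M (.comp π₁ π₂) e f ↔ ∃ g, PF.sem M π₁ e g ∧ PF.sem M π₂ g f := Iff.rfl

theorem sem_comp_assoc {M : MSC P Lab} {π₁ π₂ π₃ : PF P Lab} {e f : ℕ} :
    PF.sem M (.comp π₁ (.comp π₂ π₃)) e f ↔ PF.sem M (.comp (.comp π₁ π₂) π₃) e f := by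
  simp only [sem_comp]
  tauto

end Helpers

/-! ### Reversal -/

/-- The reverse of an MSC: all edges flipped. -/
def rev (M : MSC P Lab) : MSC P Lab where
  E := M.E
  nonemptyE := M.nonemptyE
  proc := fun a b => M.proc b a
  msg := fun a b => M.msg b a
  loc := M.loc
  lab := M.lab
  proc_mem := fun e f h => ⟨(M.proc_mem f e h).2, (M.proc_mem f e h).1⟩
  msg_mem := fun e f h => ⟨(M.msg_mem f e h).2, (M.msg_mem f e h).1⟩
  proc_loc := fun e f h => (M.proc_loc f e h).symm
  msg_loc := fun e f h => (M.msg_loc f e h).symm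
  proc_total := by
    intro e f he hf hl
    rcases M.proc_total e f he hf hl with h | h | h
    · exact Or.inl h
    · exact Or.inr (Or.inr ((tg_flip' (fun _ _ => Iff.rfl)).2 h))
    · exact Or.inr (Or.inl ((tg_flip' (fun _ _ => Iff.rfl)).2 h))
  proc_cover := by
    intro e f h hex
    rcases hex with ⟨g, h1, h2⟩
    exact M.proc_cover f e h ⟨g, (tg_flip' (fun _ _ => Iff.rfl)).1 h2,
      (tg_flip' (fun _ _ => Iff.rfl)).1 h1⟩
  msg_once := by
    intro e f e' f' h h' hd
    have := M.msg_once f e f' e' h h' (by tauto)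
    exact ⟨this.2, this.1⟩
  fifo := by
    intro e f e' f' h h' hle hlf
    exact Iff.trans (rtg_flip' (fun _ _ => Iff.rfl))
      (Iff.trans (M.fifo f' e' f e h' h hlf.symm hle.symm).symm
        (rtg_flip' (fun _ _ => Iff.rfl)).symm)
  acyclic := by
    intro e he
    exact M.acyclic e ((tg_flip' (r := fun a b => M.proc a b ∨ M.msg a b)
      (fun _ _ => Iff.rfl)).1 he)

theorem rev_procLe {M : MSC P Lab} {e f : ℕ} : (rev M).procLe e f ↔ M.procLe f e :=
  rtg_flip' (fun _ _ => Iff.rfl)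

theorem rev_procLt {M : MSC P Lab} {e f : ℕ} : (rev M).procLt e f ↔ M.procLt f e :=
  tg_flip' (fun _ _ => Iff.rfl)

theorem rev_E {M : MSC P Lab} : (rev M).E = M.E := rfl

theorem rev_loc {M : MSC P Lab} : (rev M).loc = M.loc := rfl

mutual

/-- Direction-swap of event formulas. -/
def swE : EF P Lab → EF P Lab
  | .proc p => .proc p
  | .lab a => .lab a
  | .or φ ψ => .or (swE φ) (swE ψ)
  | .not φ => .not (swE φ)
  | .dia π φ => .dia (sw π) (swE φ)
  | .loop π => .loop (sw π)

/-- Direction-swap of path formulas. -/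
def sw : PF P Lab → PF P Lab
  | .next => .prev
  | .prev => .next
  | .msg p q => .msgInv q p
  | .msgInv p q => .msg q p
  | .nextG φ => .prevG (swE φ)
  | .prevG φ => .nextG (swE φ)
  | .jump p r => .jump p r
  | .test φ => .test (swE φ)
  | .comp π₁ π₂ => .comp (sw π₁) (sw π₂)
  | .union π₁ π₂ => .union (sw π₁) (sw π₂)
  | .inter π₁ π₂ => .inter (sw π₁) (sw π₂)
  | .compl π => .compl (sw π)

end

mutual

theorem swE_swE : ∀ φ : EF P Lab, swE (swE φ) = φ
  | .proc _ => rfl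
  | .lab _ => rfl
  | .or φ ψ => by rw [swE, swE, swE_swE φ, swE_swE ψ]
  | .not φ => by rw [swE, swE, swE_swE φ]
  | .dia π φ => by rw [swE, swE, sw_sw π, swE_swE φ]
  | .loop π => by rw [swE, swE, sw_sw π]

theorem sw_sw : ∀ π : PF P Lab, sw (sw π) = π
  | .next => rfl
  | .prev => rfl
  | .msg _ _ => rfl
  | .msgInv _ _ => rfl
  | .nextG φ => by rw [sw, sw, swE_swE φ]
  | .prevG φ => by rw [sw, sw, swE_swE φ]
  | .jump _ _ => rfl
  | .test φ => by rw [sw, sw, swE_swE φ]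
  | .comp π₁ π₂ => by rw [sw, sw, sw_sw π₁, sw_sw π₂]
  | .union π₁ π₂ => by rw [sw, sw, sw_sw π₁, sw_sw π₂]
  | .inter π₁ π₂ => by rw [sw, sw, sw_sw π₁, sw_sw π₂]
  | .compl π => by rw [sw, sw, sw_sw π]

end

mutual

theorem sat_rev (M : MSC P Lab) :
    ∀ (φ : EF P Lab) (e : ℕ), EF.sat (rev M) φ e ↔ EF.sat M (swE φ) e
  | .proc _, _ => Iff.rfl
  | .lab _, _ => Iff.rfl
  | .or φ ψ, e => by
      rw [swE]
      exact or_congr (sat_rev M φ e) (sat_rev M ψ e)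
  | .not φ, e => by
      rw [swE]
      exact and_congr Iff.rfl (not_congr (sat_rev M φ e))
  | .dia π φ, e => by
      rw [swE, sat_dia, sat_dia]
      exact exists_congr fun f => and_congr (sem_rev M π e f) (sat_rev M φ f)
  | .loop π, e => by
      rw [swE]
      show PF.sem (rev M) π e e ↔ PF.sem M (sw π) e e
      exact sem_rev M π e e

theorem sem_rev (M : MSC P Lab) :
    ∀ (π : PF P Lab) (e f : ℕ), PF.sem (rev M) π e f ↔ PF.sem M (sw π) e f
  | .next, e, f => Iff.rfl
  | .prev, e, f => Iff.rfl
  | .msg p q, e, f => by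
      rw [sw]
      show M.msg f e ∧ M.loc e = p ∧ M.loc f = q ↔ M.msg f e ∧ M.loc f = q ∧ M.loc e = p
      tauto
  | .msgInv p q, e, f => by
      rw [sw]
      show M.msg e f ∧ M.loc f = p ∧ M.loc e = q ↔ M.msg e f ∧ M.loc e = q ∧ M.loc f = p
      tauto
  | .nextG φ, e, f => by
      rw [sw]
      show (rev M).procLt e f ∧ (∀ g, (rev M).procLt e g → (rev M).procLt g f →
          EF.sat (rev M) φ g) ↔ _
      show _ ↔ M.procLt f e ∧ (∀ g, M.procLt f g → M.procLt g e → EF.sat M (swE φ) g)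
      rw [rev_procLt]
      refine and_congr Iff.rfl (forall_congr' fun g => ?_)
      rw [rev_procLt, rev_procLt]
      constructor
      · intro hh h1 h2
        exact (sat_rev M φ g).1 (hh h2 h1)
      · intro hh h1 h2
        exact (sat_rev M φ g).2 (hh h2 h1)
  | .prevG φ, e, f => by
      rw [sw]
      show (rev M).procLt f e ∧ (∀ g, (rev M).procLt f g → (rev M).procLt g e →
          EF.sat (rev M) φ g) ↔ _
      show _ ↔ M.procLt e f ∧ (∀ g, M.procLt e g → M.procLt g f → EF.sat M (swE φ) g)
      rw [rev_procLt]
      refine and_congr Iff.rfl (forall_congr' fun g => ?_)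
      rw [rev_procLt, rev_procLt]
      constructor
      · intro hh h1 h2
        exact (sat_rev M φ g).1 (hh h2 h1)
      · intro hh h1 h2
        exact (sat_rev M φ g).2 (hh h2 h1)
  | .jump p r, e, f => by rw [sw]; exact Iff.rfl
  | .test φ, e, f => by
      rw [sw]
      exact and_congr Iff.rfl (sat_rev M φ e)
  | .comp π₁ π₂, e, f => by
      rw [sw, sem_comp, sem_comp]
      exact exists_congr fun g => and_congr (sem_rev M π₁ e g) (sem_rev M π₂ g f)
  | .union π₁ π₂, e, f => by
      rw [sw]
      exact or_congr (sem_rev M π₁ e f) (sem_rev M π₂ e f)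
  | .inter π₁ π₂, e, f => by
      rw [sw]
      exact and_congr (sem_rev M π₁ e f) (sem_rev M π₂ e f)
  | .compl π, e, f => by
      rw [sw]
      exact and_congr Iff.rfl (and_congr Iff.rfl (not_congr (sem_rev M π e f)))

end

mutual

theorem inFrag_swE {R : Set PDLOp} : ∀ φ : EF P Lab, EF.inFrag R φ → EF.inFrag R (swE φ)
  | .proc _, h => h
  | .lab _, h => h
  | .or φ ψ, h => ⟨inFrag_swE φ h.1, inFrag_swE ψ h.2⟩
  | .not φ, h => inFrag_swE φ h
  | .dia π φ, h => ⟨inFrag_sw π h.1, inFrag_swE φ h.2⟩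
  | .loop π, h => ⟨h.1, inFrag_sw π h.2⟩

theorem inFrag_sw {R : Set PDLOp} : ∀ π : PF P Lab, PF.inFrag R π → PF.inFrag R (sw π)
  | .next, h => h
  | .prev, h => h
  | .msg _ _, h => h
  | .msgInv _ _, h => h
  | .nextG φ, h => inFrag_swE φ h
  | .prevG φ, h => inFrag_swE φ h
  | .jump _ _, h => h
  | .test φ, h => inFrag_swE φ h
  | .comp π₁ π₂, h => ⟨inFrag_sw π₁ h.1, inFrag_sw π₂ h.2⟩
  | .union π₁ π₂, h => ⟨h.1, inFrag_sw π₁ h.2.1, inFrag_sw π₂ h.2.2⟩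
  | .inter π₁ π₂, h => ⟨h.1, inFrag_sw π₁ h.2.1, inFrag_sw π₂ h.2.2⟩
  | .compl π, h => ⟨h.1, inFrag_sw π h.2⟩

end

/-! ### The Min construction -/

section Sem

variable {M : MSC P Lab} {e f : ℕ}

theorem sem_next : PF.sem M .next e f ↔ M.proc e f := Iff.rfl

theorem sem_prev : PF.sem M .prev e f ↔ M.proc f e := Iff.rfl

theorem sem_msg {p q : P} :
    PF.sem M (.msg p q) e f ↔ M.msg e f ∧ M.loc e = p ∧ M.loc f = q := Iff.rfl

theorem sem_msgInv {p q : P} :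
    PF.sem M (.msgInv p q) e f ↔ M.msg f e ∧ M.loc f = p ∧ M.loc e = q := Iff.rfl

theorem sem_nextG {φ : EF P Lab} :
    PF.sem M (.nextG φ) e f ↔
      M.procLt e f ∧ ∀ g, M.procLt e g → M.procLt g f → EF.sat M φ g := Iff.rfl

theorem sem_prevG {φ : EF P Lab} :
    PF.sem M (.prevG φ) e f ↔
      M.procLt f e ∧ ∀ g, M.procLt f g → M.procLt g e → EF.sat M φ g := Iff.rfl

theorem sem_jump {p r : P} :
    PF.sem M (.jump p r) e f ↔
      e ∈ M.E ∧ f ∈ M.E ∧ M.loc e = p ∧ M.loc f = r := Iff.rfl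

end Sem

/-- A path formula that uses none of `∪`, `∩`, `ᶜ`. -/
def Plain : PF P Lab → Prop
  | .comp π₁ π₂ => Plain π₁ ∧ Plain π₂
  | .union _ _ => False
  | .inter _ _ => False
  | .compl _ => False
  | _ => True

theorem plain_sw : ∀ π : PF P Lab, Plain π → Plain (sw π)
  | .next, h => h
  | .prev, h => h
  | .msg _ _, h => h
  | .msgInv _ _, h => h
  | .nextG _, h => h
  | .prevG _, h => h
  | .jump _ _, h => h
  | .test _, h => h
  | .comp π₁ π₂, h => ⟨plain_sw π₁ h.1, plain_sw π₂ h.2⟩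
  | .union _ _, h => h.elim
  | .inter _ _, h => h.elim
  | .compl _, h => h.elim

theorem plain_of_inFrag {R : Set PDLOp} (hu : PDLOp.union ∉ R) (hi : PDLOp.inter ∉ R)
    (hc : PDLOp.compl ∉ R) : ∀ π : PF P Lab, PF.inFrag R π → Plain π
  | .next, _ => trivial
  | .prev, _ => trivial
  | .msg _ _, _ => trivial
  | .msgInv _ _, _ => trivial
  | .nextG _, _ => trivial
  | .prevG _, _ => trivial
  | .jump _ _, _ => trivial
  | .test _, _ => trivial
  | .comp π₁ π₂, h => ⟨plain_of_inFrag hu hi hc π₁ h.1, plain_of_inFrag hu hi hc π₂ h.2⟩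
  | .union _ _, h => absurd h.1 hu
  | .inter _ _, h => absurd h.1 hi
  | .compl _, h => absurd h.1 hc

/-- Size measure for the induction. -/
def μ : PF P Lab → ℕ
  | .comp π₁ π₂ => 2 * μ π₁ + μ π₂ + 1
  | _ => 1

theorem μ_pos : ∀ π : PF P Lab, 1 ≤ μ π
  | .next => Nat.le_refl 1
  | .prev => Nat.le_refl 1
  | .msg _ _ => Nat.le_refl 1
  | .msgInv _ _ => Nat.le_refl 1
  | .nextG _ => Nat.le_refl 1
  | .prevG _ => Nat.le_refl 1
  | .jump _ _ => Nat.le_refl 1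
  | .test _ => Nat.le_refl 1
  | .comp π₁ π₂ => Nat.le_add_left 1 _
  | .union _ _ => Nat.le_refl 1
  | .inter _ _ => Nat.le_refl 1
  | .compl _ => Nat.le_refl 1

/-- Monotone relations: images of `≤proc`-ordered points are `≤proc`-ordered. -/
def Mono (θ : PF P Lab) : Prop :=
  ∀ (M : MSC P Lab) (e e' f f' : ℕ), M.procLe e e' →
    PF.sem M θ e f → PF.sem M θ e' f' → M.procLe f f'

theorem mono_next : Mono (.next : PF P Lab) := by
  intro M e e' f f' hle h h'
  rw [sem_next] at h h'
  rcases reflTransGen_iff_eq_or_transGen.1 hle with rfl | hlt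
  · rw [succ_unique h h']
    exact procLe_refl M f'
  · exact procLe_trans (le_succ_of_lt h hlt) (procLe_of_proc h')

theorem mono_prev : Mono (.prev : PF P Lab) := by
  intro M e e' f f' hle h h'
  rw [sem_prev] at h h'
  rcases reflTransGen_iff_eq_or_transGen.1 hle with rfl | hlt
  · rw [pred_unique h h']
    exact procLe_refl M f'
  · exact le_pred_of_lt h' (procLt_of_le_of_lt (procLe_of_proc h) hlt)

theorem mono_msg (p q : P) : Mono (.msg p q : PF P Lab) := by
  intro M e e' f f' hle h h'
  rw [sem_msg] at h h'
  exact (M.fifo e f e' f' h.1 h'.1 (h.2.1.trans h'.2.1.symm)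
    (h.2.2.trans h'.2.2.symm)).1 hle

theorem mono_msgInv (p q : P) : Mono (.msgInv p q : PF P Lab) := by
  intro M e e' f f' hle h h'
  rw [sem_msgInv] at h h'
  exact (M.fifo f e f' e' h.1 h'.1 (h.2.1.trans h'.2.1.symm)
    (h.2.2.trans h'.2.2.symm)).2 hle

theorem mono_test (φ : EF P Lab) : Mono (.test φ : PF P Lab) := by
  intro M e e' f f' hle h h'
  rw [sem_test] at h h'
  rw [← h.1, ← h'.1]
  exact hle

theorem mono_comp {σ τ : PF P Lab} (hσ : Mono σ) (hτ : Mono τ) : Mono (.comp σ τ) := by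
  intro M e e' f f' hle h h'
  obtain ⟨g, hg, hgf⟩ := h
  obtain ⟨g', hg', hgf'⟩ := h'
  exact hτ M g g' f f' (hσ M e e' g g' hle hg hg') hgf hgf'

/-- The key step for minimality in composition cases. -/
theorem min_step {M : MSC P Lab} {ρ θρ : PF P Lab}
    (hA : ∀ (M : MSC P Lab) e f, PF.sem M θρ e f → isMinOf M ρ e f)
    (hB : ∀ (M : MSC P Lab) e f, PF.sem M ρ e f → ∃ m, PF.sem M θρ e m)
    (hC : Mono θρ) {g g' f f' : ℕ} (hle : M.procLe g g')
    (hg : PF.sem M θρ g f) (hρ : PF.sem M ρ g' f') : M.procLe f f' := by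
  obtain ⟨m', hm'⟩ := hB M g' f' hρ
  exact procLe_trans (hC M g g' f m' hle hg hm') ((hA M g' m' hm').2 f' hρ)

/-- From soundness and existence to the `isMinOf` characterization. -/
theorem min_iff {π θ : PF P Lab}
    (hA : ∀ (M : MSC P Lab) e f, PF.sem M θ e f → isMinOf M π e f)
    (hB : ∀ (M : MSC P Lab) e f, PF.sem M π e f → ∃ m, PF.sem M θ e m)
    (M : MSC P Lab) (e f : ℕ) : PF.sem M θ e f ↔ isMinOf M π e f := by
  constructor
  · exact hA M e f
  · intro hmin
    obtain ⟨m, hm⟩ := hB M e f hmin.1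
    have hminm := hA M e m hm
    have hfm : f = m := procLe_antisymm (hmin.2 m hminm.1) (hminm.2 f hmin.1)
    rw [hfm]
    exact hm

section PFun

theorem pfun_next : ∀ (M : MSC P Lab) (e g g' : ℕ),
    PF.sem M .next e g → PF.sem M .next e g' → g = g' :=
  fun _ _ _ _ h h' => succ_unique h h'

theorem pfun_prev : ∀ (M : MSC P Lab) (e g g' : ℕ),
    PF.sem M .prev e g → PF.sem M .prev e g' → g = g' :=
  fun _ _ _ _ h h' => pred_unique h h'

theorem pfun_msg (p q : P) : ∀ (M : MSC P Lab) (e g g' : ℕ),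
    PF.sem M (.msg p q) e g → PF.sem M (.msg p q) e g' → g = g' :=
  fun M e _ _ h h' => (M.msg_once e _ e _ h.1 h'.1 (Or.inl rfl)).2

theorem pfun_msgInv (p q : P) : ∀ (M : MSC P Lab) (e g g' : ℕ),
    PF.sem M (.msgInv p q) e g → PF.sem M (.msgInv p q) e g' → g = g' :=
  fun M e _ _ h h' => (M.msg_once _ e _ e h.1 h'.1 (Or.inr (Or.inr (Or.inr rfl)))).1

theorem pfun_test (φ : EF P Lab) : ∀ (M : MSC P Lab) (e g g' : ℕ),
    PF.sem M (.test φ) e g → PF.sem M (.test φ) e g' → g = g' :=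
  fun _ _ _ _ h h' => h.1.symm.trans h'.1

theorem pfun_self {α : PF P Lab}
    (hfun : ∀ (M : MSC P Lab) (e g g' : ℕ),
      PF.sem M α e g → PF.sem M α e g' → g = g') :
    ∀ (M : MSC P Lab) (e f : ℕ), PF.sem M α e f → isMinOf M α e f := by
  intro M e f h
  refine ⟨h, ?_⟩
  intro f' h'
  rw [hfun M e f f' h h']
  exact procLe_refl M f'

theorem pfun_case {α ρ θρ : PF P Lab}
    (hfun : ∀ (M : MSC P Lab) (e g g' : ℕ),
      PF.sem M α e g → PF.sem M α e g' → g = g')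
    (hA : ∀ (M : MSC P Lab) (e f : ℕ), PF.sem M θρ e f → isMinOf M ρ e f)
    (hB : ∀ (M : MSC P Lab) (e f : ℕ), PF.sem M ρ e f → ∃ m, PF.sem M θρ e m) :
    (∀ (M : MSC P Lab) (e f : ℕ),
        PF.sem M (.comp α θρ) e f → isMinOf M (.comp α ρ) e f) ∧
    (∀ (M : MSC P Lab) (e f : ℕ),
        PF.sem M (.comp α ρ) e f → ∃ m, PF.sem M (.comp α θρ) e m) := by
  constructor
  · intro M e f h
    obtain ⟨g, hg, hf⟩ := h
    have hmin := hA M g f hf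
    refine ⟨⟨g, hg, hmin.1⟩, ?_⟩
    intro f' h'
    obtain ⟨g', hg', hf'⟩ := h'
    rw [← hfun M e g g' hg hg'] at hf'
    exact hmin.2 f' hf'
  · intro M e f h
    obtain ⟨g, hg, hf⟩ := h
    obtain ⟨m, hm⟩ := hB M g f hf
    exact ⟨m, g, hg, hm⟩

end PFun

/-- The master lemma: for every plain path formula there is a `Min` formula. -/
theorem master [Nonempty Lab] :
    ∀ (n : ℕ) (π : PF P Lab), μ π ≤ n → Plain π →
    ∃ θ : PF P Lab,
      (∀ R : Set PDLOp, PF.inFrag R π → PF.inFrag R θ) ∧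
      (∀ (M : MSC P Lab) (e f : ℕ), PF.sem M θ e f → isMinOf M π e f) ∧
      (∀ (M : MSC P Lab) (e f : ℕ), PF.sem M π e f → ∃ m, PF.sem M θ e m) ∧
      Mono θ := by
  intro n
  induction n with
  | zero =>
    intro π hμ _
    exact absurd hμ (by have := μ_pos π; omega)
  | succ n ih =>
    intro π hμ hP
    cases π with
    | next =>
      exact ⟨.next, fun _ h => h, pfun_self pfun_next, fun M e f h => ⟨f, h⟩, mono_next⟩
    | prev =>
      exact ⟨.prev, fun _ h => h, pfun_self pfun_prev, fun M e f h => ⟨f, h⟩, mono_prev⟩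
    | msg p q =>
      exact ⟨.msg p q, fun _ h => h, pfun_self (pfun_msg p q), fun M e f h => ⟨f, h⟩,
        mono_msg p q⟩
    | msgInv p q =>
      exact ⟨.msgInv p q, fun _ h => h, pfun_self (pfun_msgInv p q), fun M e f h => ⟨f, h⟩,
        mono_msgInv p q⟩
    | test φ =>
      exact ⟨.test φ, fun _ h => h, pfun_self (pfun_test φ), fun M e f h => ⟨f, h⟩,
        mono_test φ⟩
    | jump p r =>
      refine ⟨.comp (.jump p r) (.test (.not (.dia .prev tt))), ?_, ?_, ?_, ?_⟩
      · intro R h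
        exact ⟨h, trivial, inFrag_tt⟩
      · intro M e f h
        obtain ⟨g, hj, hgf, hnp⟩ := h
        subst hgf
        rw [sem_jump] at hj
        rw [sat_not, sat_dia_prev] at hnp
        refine ⟨hj, ?_⟩
        intro f' h'
        rw [sem_jump] at h'
        rcases procLe_or_lt hj.2.1 h'.2.1 (hj.2.2.2.trans h'.2.2.2.symm) with hle | hlt
        · exact hle
        · exact absurd (exists_pred_of_lt hlt) hnp.2
      · intro M e f h
        rw [sem_jump] at h
        obtain ⟨m, hm, hmin⟩ := exists_min (M := M) (S := {x | x ∈ M.E ∧ M.loc x = r})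
          (fun x hx => hx.1) ⟨f, h.2.1, h.2.2.2⟩
          (fun a ha b hb => procLe_total ha.1 hb.1 (ha.2.trans hb.2.symm))
        refine ⟨m, m, ⟨h.1, hm.1, h.2.2.1, hm.2⟩, rfl, ?_⟩
        rw [sat_not, sat_dia_prev]
        refine ⟨hm.1, ?_⟩
        rintro ⟨h0, hp0⟩
        have h0S : h0 ∈ {x | x ∈ M.E ∧ M.loc x = r} :=
          ⟨(M.proc_mem _ _ hp0).1, (M.proc_loc _ _ hp0).trans hm.2⟩
        exact procLt_irrefl M m (procLt_of_le_of_lt (hmin h0 h0S) (procLt_of_proc hp0))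
      · intro M e e' f f' hle h h'
        obtain ⟨g, hj, hgf, hnp⟩ := h
        subst hgf
        obtain ⟨g', hj', hgf', hnp'⟩ := h'
        subst hgf'
        rw [sem_jump] at hj hj'
        rw [sat_not, sat_dia_prev] at hnp
        rcases procLe_or_lt hj.2.1 hj'.2.1 (hj.2.2.2.trans hj'.2.2.2.symm) with hle2 | hlt
        · exact hle2
        · exact absurd (exists_pred_of_lt hlt) hnp.2
    | nextG φ =>
      refine ⟨.next, fun _ _ => trivial, ?_, ?_, mono_next⟩
      · intro M e f h
        rw [sem_next] at h
        refine ⟨⟨procLt_of_proc h, ?_⟩, ?_⟩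
        · intro g hg1 hg2
          exact absurd ⟨g, hg1, hg2⟩ (M.proc_cover e f h)
        · intro f' h'
          rw [sem_nextG] at h'
          exact le_succ_of_lt h h'.1
      · intro M e f h
        rw [sem_nextG] at h
        obtain ⟨g, hg⟩ := exists_succ_of_lt h.1
        exact ⟨g, hg⟩
    | prevG φ =>
      refine ⟨.comp (.prevG φ) (.test (.not (EF.and φ (.dia .prev tt)))), ?_, ?_, ?_, ?_⟩
      · intro R h
        exact ⟨h, h, trivial, inFrag_tt⟩
      · intro M e f h
        obtain ⟨g, hpg, hgf, hψ⟩ := h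
        subst hgf
        rw [sem_prevG] at hpg
        rw [sat_not] at hψ
        refine ⟨hpg, ?_⟩
        intro f' h'
        rw [sem_prevG] at h'
        rcases procLe_or_lt (procLt_mem hpg.1).1 (procLt_mem h'.1).1
          ((procLt_loc hpg.1).trans (procLt_loc h'.1).symm) with hle | hlt
        · exact hle
        · exact absurd (sat_and.2 ⟨hψ.1, h'.2 _ hlt hpg.1,
            sat_dia_prev.2 (exists_pred_of_lt hlt)⟩) hψ.2
      · intro M e f h
        obtain ⟨m, hm, hmin⟩ := exists_min (M := M) (S := {x | PF.sem M (.prevG φ) e x})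
          (fun x hx => (sem_mem M _ e x hx).2) ⟨f, h⟩
          (fun a ha b hb => procLe_total (procLt_mem ha.1).1 (procLt_mem hb.1).1
            ((procLt_loc ha.1).trans (procLt_loc hb.1).symm))
        refine ⟨m, m, hm, rfl, ?_⟩
        rw [sat_not]
        refine ⟨(procLt_mem hm.1).1, ?_⟩
        intro hc
        obtain ⟨hmE, hφm, hdia⟩ := sat_and.1 hc
        obtain ⟨h0, hp0⟩ := sat_dia_prev.1 hdia
        have h0S : PF.sem M (.prevG φ) e h0 := by
          rw [sem_prevG]
          refine ⟨TransGen.head hp0 hm.1, ?_⟩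
          intro k hk1 hk2
          rcases reflTransGen_iff_eq_or_transGen.1 (le_succ_of_lt hp0 hk1) with heq | hlt2
          · rw [heq]; exact hφm
          · exact hm.2 k hlt2 hk2
        exact procLt_irrefl M m (procLt_of_le_of_lt (hmin h0 h0S) (procLt_of_proc hp0))
      · intro M e e' f f' hle h h'
        obtain ⟨g, hpg, hgf, hψ⟩ := h
        subst hgf
        obtain ⟨g', hpg', hgf', hψ'⟩ := h'
        subst hgf'
        rw [sem_prevG] at hpg hpg'
        rw [sat_not] at hψ
        rcases procLe_or_lt (procLt_mem hpg.1).1 (procLt_mem hpg'.1).1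
          ((procLt_loc hpg.1).trans ((procLe_loc hle).trans (procLt_loc hpg'.1).symm))
          with hle2 | hlt
        · exact hle2
        · exact absurd (sat_and.2 ⟨hψ.1, hpg'.2 _ hlt (procLt_of_lt_of_le hpg.1 hle),
            sat_dia_prev.2 (exists_pred_of_lt hlt)⟩) hψ.2
    | union π₁ π₂ => exact hP.elim
    | inter π₁ π₂ => exact hP.elim
    | compl π₁ => exact hP.elim
    | comp α ρ =>
      have hμρ : μ ρ ≤ n := by
        have h1 := μ_pos α
        simp only [μ] at hμ
        omega
      obtain ⟨θρ, hFρ, hAρ, hBρ, hCρ⟩ := ih ρ hμρ hP.2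
      have hφd : ∀ (M : MSC P Lab) (g : ℕ),
          EF.sat M (.dia θρ tt) g ↔ ∃ x, PF.sem M θρ g x := by
        intro M g
        rw [sat_dia]
        constructor
        · rintro ⟨x, hx, -⟩; exact ⟨x, hx⟩
        · rintro ⟨x, hx⟩; exact ⟨x, hx, sat_tt.2 (sem_mem M θρ g x hx).2⟩
      cases α with
      | next =>
        obtain ⟨hA, hB⟩ := pfun_case pfun_next hAρ hBρ
        exact ⟨.comp .next θρ, fun R h => ⟨h.1, hFρ R h.2⟩, hA, hB,
          mono_comp mono_next hCρ⟩
      | prev =>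
        obtain ⟨hA, hB⟩ := pfun_case pfun_prev hAρ hBρ
        exact ⟨.comp .prev θρ, fun R h => ⟨h.1, hFρ R h.2⟩, hA, hB,
          mono_comp mono_prev hCρ⟩
      | msg p q =>
        obtain ⟨hA, hB⟩ := pfun_case (pfun_msg p q) hAρ hBρ
        exact ⟨.comp (.msg p q) θρ, fun R h => ⟨h.1, hFρ R h.2⟩, hA, hB,
          mono_comp (mono_msg p q) hCρ⟩
      | msgInv p q =>
        obtain ⟨hA, hB⟩ := pfun_case (pfun_msgInv p q) hAρ hBρ
        exact ⟨.comp (.msgInv p q) θρ, fun R h => ⟨h.1, hFρ R h.2⟩, hA, hB,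
          mono_comp (mono_msgInv p q) hCρ⟩
      | test φ =>
        obtain ⟨hA, hB⟩ := pfun_case (pfun_test φ) hAρ hBρ
        exact ⟨.comp (.test φ) θρ, fun R h => ⟨h.1, hFρ R h.2⟩, hA, hB,
          mono_comp (mono_test φ) hCρ⟩
      | jump p r =>
        refine ⟨.comp (.jump p r) (.comp (.test (EF.and (.dia θρ tt)
          (.not (.dia (.prevG tt) (.dia θρ tt))))) θρ), ?_, ?_, ?_, ?_⟩
        · intro R h
          have hθ := hFρ R h.2
          exact ⟨trivial, ⟨⟨hθ, inFrag_tt⟩, inFrag_tt, hθ, inFrag_tt⟩, hθ⟩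
        · intro M e f h
          obtain ⟨g, hj, g2, ⟨hgg2, hψ⟩, hθ⟩ := h
          subst hgg2
          rw [sem_jump] at hj
          obtain ⟨hgE, hd, hn⟩ := sat_and.1 hψ
          rw [sat_not, sat_dia_prevG_tt] at hn
          have hming := hAρ M g f hθ
          refine ⟨⟨g, hj, hming.1⟩, ?_⟩
          intro f' h'
          obtain ⟨g', hj', hρ'⟩ := h'
          rw [sem_jump] at hj'
          have hgg' : M.procLe g g' := by
            rcases procLe_or_lt hj.2.1 hj'.2.1 (hj.2.2.2.trans hj'.2.2.2.symm)
              with hle2 | hlt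
            · exact hle2
            · exfalso
              obtain ⟨x, hx⟩ := hBρ M g' f' hρ'
              exact hn.2 ⟨g', hlt, (hφd M g').2 ⟨x, hx⟩⟩
          exact min_step hAρ hBρ hCρ hgg' hθ hρ'
        · intro M e f h
          obtain ⟨g, hj, hρ⟩ := h
          rw [sem_jump] at hj
          obtain ⟨x0, hx0⟩ := hBρ M g f hρ
          obtain ⟨m, hm, hmin⟩ := exists_min (M := M)
            (S := {x | x ∈ M.E ∧ M.loc x = r ∧ EF.sat M (.dia θρ tt) x})
            (fun x hx => hx.1) ⟨g, hj.2.1, hj.2.2.2, (hφd M g).2 ⟨x0, hx0⟩⟩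
            (fun a ha b hb => procLe_total ha.1 hb.1 (ha.2.1.trans hb.2.1.symm))
          obtain ⟨x, hx⟩ := (hφd M m).1 hm.2.2
          refine ⟨x, m, ⟨hj.1, hm.1, hj.2.2.1, hm.2.1⟩, m, ⟨rfl, ?_⟩, hx⟩
          refine sat_and.2 ⟨hm.1, hm.2.2, ?_⟩
          rw [sat_not, sat_dia_prevG_tt]
          refine ⟨hm.1, ?_⟩
          rintro ⟨h0, hlt0, hd0⟩
          have h0S : h0 ∈ {x | x ∈ M.E ∧ M.loc x = r ∧ EF.sat M (.dia θρ tt) x} :=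
            ⟨(procLt_mem hlt0).1, (procLt_loc hlt0).trans hm.2.1, hd0⟩
          exact procLt_irrefl M m (procLt_of_le_of_lt (hmin h0 h0S) hlt0)
        · intro M e e' f f' hle h h'
          obtain ⟨g, hj, g2, ⟨hgg2, hψ⟩, hθ⟩ := h
          subst hgg2
          obtain ⟨g', hj', g2', ⟨hgg2', hψ'⟩, hθ'⟩ := h'
          subst hgg2'
          rw [sem_jump] at hj hj'
          obtain ⟨hgE, hd, hn⟩ := sat_and.1 hψ
          rw [sat_not, sat_dia_prevG_tt] at hn
          obtain ⟨hgE', hd', hn'⟩ := sat_and.1 hψ'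
          have hgg' : M.procLe g g' := by
            rcases procLe_or_lt hj.2.1 hj'.2.1 (hj.2.2.2.trans hj'.2.2.2.symm)
              with hle2 | hlt
            · exact hle2
            · exact absurd ⟨g', hlt, hd'⟩ hn.2
          exact hCρ M g g' f f' hgg' hθ hθ'
      | nextG φ =>
        refine ⟨.comp (.nextG (EF.and φ (.not (.dia θρ tt))))
          (.comp (.test (.dia θρ tt)) θρ), ?_, ?_, ?_, ?_⟩
        · intro R h
          have hθ := hFρ R h.2
          exact ⟨⟨h.1, hθ, inFrag_tt⟩, ⟨hθ, inFrag_tt⟩, hθ⟩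
        · intro M e f h
          obtain ⟨g, hng, g2, ⟨hgg2, hd⟩, hθ⟩ := h
          subst hgg2
          rw [sem_nextG] at hng
          have hming := hAρ M g f hθ
          refine ⟨⟨g, ⟨hng.1, fun k h1 h2 => (sat_and.1 (hng.2 k h1 h2)).2.1⟩,
            hming.1⟩, ?_⟩
          intro f' h'
          obtain ⟨g', hng', hρ'⟩ := h'
          rw [sem_nextG] at hng'
          have hgg' : M.procLe g g' := by
            rcases procLe_or_lt (procLt_mem hng.1).2 (procLt_mem hng'.1).2
              ((procLt_loc hng.1).symm.trans (procLt_loc hng'.1)) with hle2 | hlt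
            · exact hle2
            · exfalso
              have hx2 := (sat_and.1 (hng.2 g' hng'.1 hlt)).2.2
              rw [sat_not] at hx2
              obtain ⟨x, hx⟩ := hBρ M g' f' hρ'
              exact hx2.2 ((hφd M g').2 ⟨x, hx⟩)
          exact min_step hAρ hBρ hCρ hgg' hθ hρ'
        · intro M e f h
          obtain ⟨g, hng, hρ⟩ := h
          obtain ⟨x0, hx0⟩ := hBρ M g f hρ
          obtain ⟨m, hm, hmin⟩ := exists_min (M := M)
            (S := {x | PF.sem M (.nextG φ) e x ∧ EF.sat M (.dia θρ tt) x})
            (fun x hx => (sem_mem M _ e x hx.1).2)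
            ⟨g, hng, (hφd M g).2 ⟨x0, hx0⟩⟩
            (fun a ha b hb => procLe_total (procLt_mem ha.1.1).2 (procLt_mem hb.1.1).2
              ((procLt_loc ha.1.1).symm.trans (procLt_loc hb.1.1)))
          obtain ⟨x, hx⟩ := (hφd M m).1 hm.2
          refine ⟨x, m, ?_, m, ⟨rfl, hm.2⟩, hx⟩
          rw [sem_nextG]
          refine ⟨hm.1.1, ?_⟩
          intro k h1 h2
          refine sat_and.2 ⟨(procLt_mem h1).2, hm.1.2 k h1 h2, ?_⟩
          rw [sat_not]
          refine ⟨(procLt_mem h1).2, ?_⟩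
          intro hdk
          have hkS : k ∈ {x | PF.sem M (.nextG φ) e x ∧ EF.sat M (.dia θρ tt) x} :=
            ⟨⟨h1, fun j hj1 hj2 => hm.1.2 j hj1 (procLt_trans hj2 h2)⟩, hdk⟩
          exact procLt_irrefl M m (procLt_of_le_of_lt (hmin k hkS) h2)
        · intro M e e' f f' hle h h'
          obtain ⟨g, hng, g2, ⟨hgg2, hd⟩, hθ⟩ := h
          subst hgg2
          obtain ⟨g', hng', g2', ⟨hgg2', hd'⟩, hθ'⟩ := h'
          subst hgg2'
          rw [sem_nextG] at hng hng'
          have hgg' : M.procLe g g' := by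
            rcases procLe_or_lt (procLt_mem hng.1).2 (procLt_mem hng'.1).2
              ((procLt_loc hng.1).symm.trans ((procLe_loc hle).trans
                (procLt_loc hng'.1))) with hle2 | hlt
            · exact hle2
            · exfalso
              have hlt2 : M.procLt e g' := procLt_of_le_of_lt hle hng'.1
              have hx2 := (sat_and.1 (hng.2 g' hlt2 hlt)).2.2
              rw [sat_not] at hx2
              exact hx2.2 hd'
          exact hCρ M g g' f f' hgg' hθ hθ'
      | prevG φ =>
        refine ⟨.comp (.prevG φ) (.comp (.test (EF.and (.dia θρ tt)
          (.not (EF.and φ (.dia (.prevG φ) (.dia θρ tt)))))) θρ), ?_, ?_, ?_, ?_⟩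
        · intro R h
          have hθ := hFρ R h.2
          exact ⟨h.1, ⟨⟨hθ, inFrag_tt⟩, h.1, h.1, hθ, inFrag_tt⟩, hθ⟩
        · intro M e f h
          obtain ⟨g, hpg, g2, ⟨hgg2, hψ⟩, hθ⟩ := h
          subst hgg2
          rw [sem_prevG] at hpg
          obtain ⟨hgE, hd, hn⟩ := sat_and.1 hψ
          rw [sat_not] at hn
          have hming := hAρ M g f hθ
          refine ⟨⟨g, hpg, hming.1⟩, ?_⟩
          intro f' h'
          obtain ⟨g', hpg', hρ'⟩ := h'
          rw [sem_prevG] at hpg'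
          have hgg' : M.procLe g g' := by
            rcases procLe_or_lt (procLt_mem hpg.1).1 (procLt_mem hpg'.1).1
              ((procLt_loc hpg.1).trans (procLt_loc hpg'.1).symm) with hle2 | hlt
            · exact hle2
            · exfalso
              obtain ⟨x, hx⟩ := hBρ M g' f' hρ'
              refine hn.2 (sat_and.2 ⟨hgE, hpg'.2 g hlt hpg.1, ?_⟩)
              rw [sat_dia]
              refine ⟨g', ?_, (hφd M g').2 ⟨x, hx⟩⟩
              rw [sem_prevG]
              exact ⟨hlt, fun k hk1 hk2 => hpg'.2 k hk1 (procLt_trans hk2 hpg.1)⟩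
          exact min_step hAρ hBρ hCρ hgg' hθ hρ'
        · intro M e f h
          obtain ⟨g, hpg, hρ⟩ := h
          obtain ⟨x0, hx0⟩ := hBρ M g f hρ
          obtain ⟨m, hm, hmin⟩ := exists_min (M := M)
            (S := {x | PF.sem M (.prevG φ) e x ∧ EF.sat M (.dia θρ tt) x})
            (fun x hx => (sem_mem M _ e x hx.1).2)
            ⟨g, hpg, (hφd M g).2 ⟨x0, hx0⟩⟩
            (fun a ha b hb => procLe_total (procLt_mem ha.1.1).1 (procLt_mem hb.1.1).1
              ((procLt_loc ha.1.1).trans (procLt_loc hb.1.1).symm))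
          obtain ⟨x, hx⟩ := (hφd M m).1 hm.2
          refine ⟨x, m, hm.1, m, ⟨rfl, ?_⟩, hx⟩
          refine sat_and.2 ⟨(procLt_mem hm.1.1).1, hm.2, ?_⟩
          rw [sat_not]
          refine ⟨(procLt_mem hm.1.1).1, ?_⟩
          intro hc
          obtain ⟨hmE2, hφm, hdia⟩ := sat_and.1 hc
          rw [sat_dia] at hdia
          obtain ⟨h0, hp0, hd0⟩ := hdia
          rw [sem_prevG] at hp0
          have h0S : h0 ∈ {x | PF.sem M (.prevG φ) e x ∧ EF.sat M (.dia θρ tt) x} := by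
            refine ⟨⟨procLt_trans hp0.1 hm.1.1, ?_⟩, hd0⟩
            intro k hk1 hk2
            rcases procLe_or_lt (procLt_mem hm.1.1).1 (procLt_mem hk1).2
              ((procLt_loc hm.1.1).trans (procLt_loc hk2).symm) with hle2 | hlt2
            · rcases reflTransGen_iff_eq_or_transGen.1 hle2 with heq | hlt3
              · rw [heq]; exact hφm
              · exact hm.1.2 k hlt3 hk2
            · exact hp0.2 k hk1 hlt2
          exact procLt_irrefl M m (procLt_of_le_of_lt (hmin h0 h0S) hp0.1)
        · intro M e e' f f' hle h h'
          obtain ⟨g, hpg, g2, ⟨hgg2, hψ⟩, hθ⟩ := h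
          subst hgg2
          obtain ⟨g', hpg', g2', ⟨hgg2', hψ'⟩, hθ'⟩ := h'
          subst hgg2'
          rw [sem_prevG] at hpg hpg'
          obtain ⟨hgE, hd, hn⟩ := sat_and.1 hψ
          rw [sat_not] at hn
          obtain ⟨hgE', hd', hn'⟩ := sat_and.1 hψ'
          have hgg' : M.procLe g g' := by
            rcases procLe_or_lt (procLt_mem hpg.1).1 (procLt_mem hpg'.1).1
              ((procLt_loc hpg.1).trans ((procLe_loc hle).trans
                (procLt_loc hpg'.1).symm)) with hle2 | hlt
            · exact hle2
            · exfalso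
              refine hn.2 (sat_and.2 ⟨hgE,
                hpg'.2 g hlt (procLt_of_lt_of_le hpg.1 hle), ?_⟩)
              rw [sat_dia]
              refine ⟨g', ?_, hd'⟩
              rw [sem_prevG]
              exact ⟨hlt, fun k hk1 hk2 => hpg'.2 k hk1
                (procLt_of_lt_of_le (procLt_trans hk2 hpg.1) hle)⟩
          exact hCρ M g g' f f' hgg' hθ hθ'
      | comp π₁ π₂ =>
        have hμ' : μ (.comp π₁ (.comp π₂ ρ)) ≤ n := by
          have h1 := μ_pos π₁
          simp only [μ] at hμ ⊢
          omega
        obtain ⟨θ, hF, hA, hB, hC⟩ := ih _ hμ' ⟨hP.1.1, hP.1.2, hP.2⟩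
        refine ⟨θ, ?_, ?_, ?_, hC⟩
        · intro R h
          exact hF R ⟨h.1.1, h.1.2, h.2⟩
        · intro M e f h
          have hm := hA M e f h
          refine ⟨sem_comp_assoc.1 hm.1, ?_⟩
          intro f' h'
          exact hm.2 f' (sem_comp_assoc.2 h')
        · intro M e f h
          exact hB M e f (sem_comp_assoc.2 h)
      | union π₁ π₂ => exact hP.1.elim
      | inter π₁ π₂ => exact hP.1.elim
      | compl π₁ => exact hP.1.elim

end MinMax

/-- For `R = ∅` or `R = {Loop}` and a path formula
`π ∈ PDLsf[R]`, there are path formulas `Minπ, Maxπ ∈ PDLsf[R]` defining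
the relations `{(e, min_π(e))}` and `{(e, max_π(e))}`. -/
theorem pdlsf_min_max_definable {P Lab : Type}
    [Fintype P] [Nonempty P] [Fintype Lab] [Nonempty Lab]
    (R : Set PDLOp) (hR : R = ∅ ∨ R = {PDLOp.loop})
    (π : PF P Lab) (hπ : PF.inFrag R π) :
    ∃ mnπ mxπ : PF P Lab, PF.inFrag R mnπ ∧ PF.inFrag R mxπ ∧
      ∀ (M : MSC P Lab) (e f : ℕ),
        (PF.sem M mnπ e f ↔ isMinOf M π e f) ∧
        (PF.sem M mxπ e f ↔ isMaxOf M π e f) := by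
  classical
  have hu : PDLOp.union ∉ R := by
    rcases hR with rfl | rfl <;> simp
  have hi : PDLOp.inter ∉ R := by
    rcases hR with rfl | rfl <;> simp
  have hc : PDLOp.compl ∉ R := by
    rcases hR with rfl | rfl <;> simp
  have hPl := MinMax.plain_of_inFrag hu hi hc π hπ
  obtain ⟨θ, hF, hA, hB, hC⟩ := MinMax.master (MinMax.μ π) π (le_refl _) hPl
  obtain ⟨θ', hF', hA', hB', hC'⟩ :=
    MinMax.master (MinMax.μ (MinMax.sw π)) (MinMax.sw π) (le_refl _)
      (MinMax.plain_sw π hPl)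
  refine ⟨θ, MinMax.sw θ', hF R hπ,
    MinMax.inFrag_sw θ' (hF' R (MinMax.inFrag_sw π hπ)), ?_⟩
  intro M e f
  constructor
  · exact MinMax.min_iff hA hB M e f
  · have h1 : PF.sem M (MinMax.sw θ') e f ↔ PF.sem (MinMax.rev M) θ' e f :=
      (MinMax.sem_rev M θ' e f).symm
    rw [h1, MinMax.min_iff hA' hB' (MinMax.rev M) e f]
    unfold isMinOf isMaxOf
    constructor
    · rintro ⟨h2, h3⟩
      refine ⟨?_, ?_⟩
      · have h4 := (MinMax.sem_rev M (MinMax.sw π) e f).1 h2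
        rwa [MinMax.sw_sw] at h4
      · intro x hx
        have hx' : PF.sem (MinMax.rev M) (MinMax.sw π) e x := by
          rw [MinMax.sem_rev, MinMax.sw_sw]; exact hx
        exact MinMax.rev_procLe.1 (h3 x hx')
    · rintro ⟨h2, h3⟩
      refine ⟨?_, ?_⟩
      · rw [MinMax.sem_rev, MinMax.sw_sw]; exact h2
      · intro x hx
        have hx' : PF.sem M π e x := by
          have h4 := (MinMax.sem_rev M (MinMax.sw π) e x).1 hx
          rwa [MinMax.sw_sw] at h4
        exact MinMax.rev_procLe.2 (h3 x hx')
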